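/- arXiv:1909.01947 — 3 statements merged into one kernel-verified Lean document; each statement's English description precedes it below -/
import Mathlib

section
/- (Weyl's inequality for singular values) For any A, B ∈ ℝ^{n×m} and any index i with 1 ≤ i ≤ min(m,n), the singular values satisfy |σᵢ(A + B) − σᵢ(A)| ≤ ‖B‖, where ‖B‖ is the spectral norm and singular values are ordered nonincreasingly. -/
open Matrix

/-- Moore–Penrose pseudoinverse predicate (the four Penrose conditions). -/
def IsMP {p q : ℕ} (A : Matrix (Fin p) (Fin q) ℝ) (X : Matrix (Fin q) (Fin p) ℝ) : Prop :=
  A * X * A = A ∧ X * A * X = X ∧ (A * X)ᵀ = A * X ∧ (X * A)ᵀ = X * A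

/-- spectral (operator) norm of a matrix, induced by Euclidean vector norms. -/
noncomputable def specNorm {p q : ℕ} (A : Matrix (Fin p) (Fin q) ℝ) : ℝ :=
  ‖LinearMap.toContinuousLinearMap (Matrix.toEuclideanLin A)‖

/-- Euclidean norm of a vector. -/
noncomputable def enorm {p : ℕ} (x : Fin p → ℝ) : ℝ :=
  ‖(WithLp.equiv 2 (Fin p → ℝ)).symm x‖

/-- the `i`-th largest singular value (0-indexed) of a real matrix. -/
noncomputable def sv {p q : ℕ} (A : Matrix (Fin p) (Fin q) ℝ) (i : Fin q) : ℝ :=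
  Real.sqrt (((Matrix.isHermitian_conjTranspose_mul_self A).eigenvalues ∘
    Tuple.sort (Matrix.isHermitian_conjTranspose_mul_self A).eigenvalues) i.rev)

variable {n m : ℕ}

noncomputable def svMu (M : Matrix (Fin n) (Fin m) ℝ) : Fin m → ℝ :=
  (Matrix.isHermitian_conjTranspose_mul_self M).eigenvalues ∘
    Tuple.sort (Matrix.isHermitian_conjTranspose_mul_self M).eigenvalues

noncomputable def svB (M : Matrix (Fin n) (Fin m) ℝ) :
    OrthonormalBasis (Fin m) ℝ (EuclideanSpace ℝ (Fin m)) :=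
  (Matrix.isHermitian_conjTranspose_mul_self M).eigenvectorBasis.reindex
    (Tuple.sort (Matrix.isHermitian_conjTranspose_mul_self M).eigenvalues).symm

lemma svMu_mono (M : Matrix (Fin n) (Fin m) ℝ) : Monotone (svMu M) :=
  Tuple.monotone_sort _

lemma svMu_nonneg (M : Matrix (Fin n) (Fin m) ℝ) (j : Fin m) : 0 ≤ svMu M j :=
  (Matrix.posSemidef_conjTranspose_mul_self M).eigenvalues_nonneg _

lemma svB_eigen (M : Matrix (Fin n) (Fin m) ℝ) (j : Fin m) :
    Matrix.toEuclideanLin (Mᵀ * M) (svB M j) = svMu M j • svB M j := by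
  have h := (Matrix.isHermitian_conjTranspose_mul_self M).mulVec_eigenvectorBasis
    (Tuple.sort (Matrix.isHermitian_conjTranspose_mul_self M).eigenvalues j)
  have hb : (svB M j : EuclideanSpace ℝ (Fin m)) =
      (Matrix.isHermitian_conjTranspose_mul_self M).eigenvectorBasis
        (Tuple.sort (Matrix.isHermitian_conjTranspose_mul_self M).eigenvalues j) := by
    simp [svB, OrthonormalBasis.reindex_apply]
  rw [hb, Matrix.toEuclideanLin_apply]
  ext k
  have := congrFun h k
  simpa [svMu] using this

lemma repr_toEuclideanLin (M : Matrix (Fin n) (Fin m) ℝ) (x : EuclideanSpace ℝ (Fin m))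
    (j : Fin m) :
    (svB M).repr (Matrix.toEuclideanLin (Mᵀ * M) x) j = svMu M j * (svB M).repr x j := by
  have hsym : LinearMap.IsSymmetric (Matrix.toEuclideanLin (Mᵀ * M)) :=
    Matrix.isHermitian_iff_isSymmetric.mp (Matrix.isHermitian_conjTranspose_mul_self M)
  rw [OrthonormalBasis.repr_apply_apply, OrthonormalBasis.repr_apply_apply,
    ← hsym (svB M j) x, svB_eigen, inner_smul_left]
  simp

lemma norm_sq_toEuclideanLin (M : Matrix (Fin n) (Fin m) ℝ) (x : EuclideanSpace ℝ (Fin m)) :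
    ‖Matrix.toEuclideanLin M x‖ ^ 2 = ∑ j, svMu M j * ((svB M).repr x j) ^ 2 := by
  have h1 : ‖Matrix.toEuclideanLin M x‖ ^ 2
      = inner ℝ x (Matrix.toEuclideanLin (Mᵀ * M) x) := by
    rw [← real_inner_self_eq_norm_sq]
    rw [Matrix.toEuclideanLin_apply, Matrix.toEuclideanLin_apply]
    simp only [PiLp.inner_apply, RCLike.inner_apply, starRingEnd_apply, star_trivial]
    have : ∀ (p : ℕ) (u v : Fin p → ℝ), (∑ k, u k * v k) = u ⬝ᵥ v := by
      intro p u v; simp [dotProduct]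
    rw [this, this, ← Matrix.mulVec_mulVec, Matrix.dotProduct_mulVec,
      Matrix.mulVec_transpose, dotProduct_comm]
  have h2 : (inner ℝ x (Matrix.toEuclideanLin (Mᵀ * M) x) : ℝ)
      = inner ℝ ((svB M).repr x) ((svB M).repr (Matrix.toEuclideanLin (Mᵀ * M) x)) := by
    rw [LinearIsometryEquiv.inner_map_map]
  rw [h1, h2]
  simp only [PiLp.inner_apply, RCLike.inner_apply, starRingEnd_apply, star_trivial,
    repr_toEuclideanLin]
  apply Finset.sum_congr rfl
  intro j _
  ring

lemma norm_sq_repr (b : OrthonormalBasis (Fin m) ℝ (EuclideanSpace ℝ (Fin m)))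
    (x : EuclideanSpace ℝ (Fin m)) : ‖x‖ ^ 2 = ∑ j, (b.repr x j) ^ 2 := by
  rw [← b.repr.norm_map x, ← real_inner_self_eq_norm_sq]
  simp only [PiLp.inner_apply, RCLike.inner_apply, starRingEnd_apply, star_trivial]
  apply Finset.sum_congr rfl; intro j _; ring

lemma repr_eq_zero_of_mem_span (b : OrthonormalBasis (Fin m) ℝ (EuclideanSpace ℝ (Fin m)))
    (s : Set (Fin m)) (x : EuclideanSpace ℝ (Fin m))
    (hx : x ∈ Submodule.span ℝ (b '' s)) (j : Fin m) (hj : j ∉ s) : b.repr x j = 0 := by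
  induction hx using Submodule.span_induction with
  | mem y hy =>
    obtain ⟨k, hk, rfl⟩ := hy
    rw [b.repr_self]
    have hjk : j ≠ k := fun h => hj (h ▸ hk)
    rw [EuclideanSpace.single_apply, if_neg hjk]
  | zero => simp
  | add y z _ _ hy hz => simp [hy, hz]
  | smul a y _ hy => simp [hy]

lemma finrank_span_orthonormal (b : OrthonormalBasis (Fin m) ℝ (EuclideanSpace ℝ (Fin m)))
    (s : Finset (Fin m)) :
    Module.finrank ℝ (Submodule.span ℝ (b '' ↑s)) = s.card := by
  have h1 : Orthonormal ℝ (fun j : s => b j) :=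
    b.orthonormal.comp _ Subtype.val_injective
  have h2 : LinearIndependent ℝ (fun j : s => b (j : Fin m)) := h1.linearIndependent
  have : (b '' ↑s) = Set.range (fun j : s => b (j : Fin m)) := by
    ext y; simp
  rw [this, finrank_span_eq_card h2, Fintype.card_coe]

lemma claim_le (M : Matrix (Fin n) (Fin m) ℝ) (r : Fin m) (x : EuclideanSpace ℝ (Fin m))
    (hx : x ∈ Submodule.span ℝ (svB M '' {j | j ≤ r})) :
    ‖Matrix.toEuclideanLin M x‖ ≤ Real.sqrt (svMu M r) * ‖x‖ := by
  have hsq : ‖Matrix.toEuclideanLin M x‖ ^ 2 ≤ svMu M r * ‖x‖ ^ 2 := by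
    rw [norm_sq_toEuclideanLin, norm_sq_repr (svB M), Finset.mul_sum]
    apply Finset.sum_le_sum
    intro j _
    by_cases hj : j ≤ r
    · exact mul_le_mul_of_nonneg_right (svMu_mono M hj) (sq_nonneg _)
    · rw [repr_eq_zero_of_mem_span (svB M) _ x hx j hj]
      simp
  calc ‖Matrix.toEuclideanLin M x‖ = Real.sqrt (‖Matrix.toEuclideanLin M x‖ ^ 2) := by
        rw [Real.sqrt_sq (norm_nonneg _)]
    _ ≤ Real.sqrt (svMu M r * ‖x‖ ^ 2) := Real.sqrt_le_sqrt hsq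
    _ = Real.sqrt (svMu M r) * ‖x‖ := by
        rw [Real.sqrt_mul (svMu_nonneg M r), Real.sqrt_sq (norm_nonneg _)]

lemma claim_ge (M : Matrix (Fin n) (Fin m) ℝ) (r : Fin m) (x : EuclideanSpace ℝ (Fin m))
    (hx : x ∈ Submodule.span ℝ (svB M '' {j | r ≤ j})) :
    Real.sqrt (svMu M r) * ‖x‖ ≤ ‖Matrix.toEuclideanLin M x‖ := by
  have hsq : svMu M r * ‖x‖ ^ 2 ≤ ‖Matrix.toEuclideanLin M x‖ ^ 2 := by
    rw [norm_sq_toEuclideanLin, norm_sq_repr (svB M), Finset.mul_sum]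
    apply Finset.sum_le_sum
    intro j _
    by_cases hj : r ≤ j
    · exact mul_le_mul_of_nonneg_right (svMu_mono M hj) (sq_nonneg _)
    · rw [repr_eq_zero_of_mem_span (svB M) _ x hx j hj]
      simp
  calc Real.sqrt (svMu M r) * ‖x‖ = Real.sqrt (svMu M r * ‖x‖ ^ 2) := by
        rw [Real.sqrt_mul (svMu_nonneg M r), Real.sqrt_sq (norm_nonneg _)]
    _ ≤ Real.sqrt (‖Matrix.toEuclideanLin M x‖ ^ 2) := Real.sqrt_le_sqrt hsq
    _ = ‖Matrix.toEuclideanLin M x‖ := Real.sqrt_sq (norm_nonneg _)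

lemma sv_eq (M : Matrix (Fin n) (Fin m) ℝ) (i : Fin m) :
    sv M i = Real.sqrt (svMu M i.rev) := rfl

lemma toELin_le_specNorm (B : Matrix (Fin n) (Fin m) ℝ) (x : EuclideanSpace ℝ (Fin m)) :
    ‖Matrix.toEuclideanLin B x‖ ≤ specNorm B * ‖x‖ := by
  have := (LinearMap.toContinuousLinearMap (Matrix.toEuclideanLin B)).le_opNorm x
  simpa [specNorm] using this

lemma weyl_le (A B : Matrix (Fin n) (Fin m) ℝ) (i : Fin m) :
    sv (A + B) i ≤ sv A i + specNorm B := by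
  set r := i.rev with hr
  set W := Submodule.span ℝ ((svB A : Fin m → EuclideanSpace ℝ (Fin m)) '' {j | j ≤ r}) with hWdef
  set V := Submodule.span ℝ ((svB (A + B) : Fin m → EuclideanSpace ℝ (Fin m)) '' {j | r ≤ j})
    with hVdef
  have hWrank : Module.finrank ℝ W = (r : ℕ) + 1 := by
    have : ({j | j ≤ r} : Set (Fin m)) = ↑(Finset.Iic r) := by ext j; simp
    rw [hWdef, this, finrank_span_orthonormal, Fin.card_Iic]
  have hVrank : Module.finrank ℝ V = m - (r : ℕ) := by
    have : ({j | r ≤ j} : Set (Fin m)) = ↑(Finset.Ici r) := by ext j; simp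
    rw [hVdef, this, finrank_span_orthonormal, Fin.card_Ici]
  have hne : W ⊓ V ≠ ⊥ := by
    intro hbot
    have hsum := Submodule.finrank_sup_add_finrank_inf_eq W V
    rw [hbot] at hsum
    have hle : Module.finrank ℝ ↥(W ⊔ V) ≤ m := by
      simpa [finrank_euclideanSpace] using Submodule.finrank_le (W ⊔ V)
    have hrm : (r : ℕ) < m := r.isLt
    simp only [finrank_bot, add_zero] at hsum
    omega
  obtain ⟨x, hxWV, hx0⟩ := Submodule.exists_mem_ne_zero_of_ne_bot hne
  have hxW : x ∈ W := hxWV.1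
  have hxV : x ∈ V := hxWV.2
  have hxn : (0 : ℝ) < ‖x‖ := norm_pos_iff.mpr hx0
  have h1 : Real.sqrt (svMu (A + B) r) * ‖x‖ ≤ ‖Matrix.toEuclideanLin (A + B) x‖ :=
    claim_ge (A + B) r x hxV
  have h2 : ‖Matrix.toEuclideanLin A x‖ ≤ Real.sqrt (svMu A r) * ‖x‖ :=
    claim_le A r x hxW
  have h3 : ‖Matrix.toEuclideanLin (A + B) x‖
      ≤ ‖Matrix.toEuclideanLin A x‖ + ‖Matrix.toEuclideanLin B x‖ := by
    rw [map_add]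
    exact norm_add_le _ _
  have h4 := toELin_le_specNorm B x
  have : Real.sqrt (svMu (A + B) r) * ‖x‖ ≤ (Real.sqrt (svMu A r) + specNorm B) * ‖x‖ := by
    calc Real.sqrt (svMu (A + B) r) * ‖x‖ ≤ ‖Matrix.toEuclideanLin (A + B) x‖ := h1
      _ ≤ ‖Matrix.toEuclideanLin A x‖ + ‖Matrix.toEuclideanLin B x‖ := h3
      _ ≤ Real.sqrt (svMu A r) * ‖x‖ + specNorm B * ‖x‖ := add_le_add h2 h4
      _ = (Real.sqrt (svMu A r) + specNorm B) * ‖x‖ := by ring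
  rw [sv_eq, sv_eq, ← hr]
  exact le_of_mul_le_mul_right (by linarith [this]) hxn

lemma specNorm_neg (B : Matrix (Fin n) (Fin m) ℝ) : specNorm (-B) = specNorm B := by
  unfold specNorm
  rw [map_neg, map_neg, norm_neg]

/-- Weyl's inequality for singular values: `|σᵢ(A+B) − σᵢ(A)| ≤ ‖B‖`. -/
theorem stmt6 {n m : ℕ} (A B : Matrix (Fin n) (Fin m) ℝ) (i : Fin m)
    (hi : (i : ℕ) < min m n) :
    |sv (A + B) i - sv A i| ≤ specNorm B := by
  rw [abs_sub_le_iff]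
  constructor
  · linarith [weyl_le A B i]
  · have := weyl_le (A + B) (-B) i
    rw [add_neg_cancel_right, specNorm_neg] at this
    linarith
end

section
/- Let A ∈ ℝ^{n×m}, L ∈ ℝ^{ℓ×m} with ker(L) = {0}, and α > 0. Then (AᵀA + αLᵀL)⁻¹ Aᵀ = Γ Aᵀ (A Γ Aᵀ + αI)⁻¹, where Γ = L† L†ᵀ = (LᵀL)⁻¹. -/
open Matrix

lemma posDef_smul' {p : ℕ} {M : Matrix (Fin p) (Fin p) ℝ} (hM : M.PosDef) {α : ℝ}
    (hα : 0 < α) : (α • M).PosDef := by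
  refine Matrix.PosDef.of_dotProduct_mulVec_pos (by rw [Matrix.IsHermitian, conjTranspose_smul, hM.1.eq, star_trivial]) fun x hx => ?_
  rw [smul_mulVec, dotProduct_smul]
  exact mul_pos hα (hM.dotProduct_mulVec_pos hx)

lemma posDef_transpose_mul_self {p q : ℕ} (L : Matrix (Fin p) (Fin q) ℝ)
    (hL : ∀ x : Fin q → ℝ, L *ᵥ x = 0 → x = 0) : (Lᵀ * L).PosDef := by
  refine Matrix.PosDef.of_dotProduct_mulVec_pos (isHermitian_conjTranspose_mul_self L) fun x hx => ?_
  have h1 : L *ᵥ x ≠ 0 := fun h => hx (hL x h)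
  have : star x ⬝ᵥ (Lᵀ * L) *ᵥ x = star (L *ᵥ x) ⬝ᵥ (L *ᵥ x) := by
    rw [← mulVec_mulVec, dotProduct_mulVec, star_mulVec]
    simp [vecMul_transpose]
  rw [this]
  exact (dotProduct_star_self_pos_iff).mpr h1

/-- With `Γ = (LᵀL)⁻¹`: `(AᵀA + αLᵀL)⁻¹Aᵀ = ΓAᵀ(AΓAᵀ + αI)⁻¹`. -/
theorem stmt13 {n m l : ℕ} (A : Matrix (Fin n) (Fin m) ℝ) (L : Matrix (Fin l) (Fin m) ℝ)
    (hL : ∀ x : Fin m → ℝ, L *ᵥ x = 0 → x = 0) (α : ℝ) (hα : 0 < α) :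
    (Aᵀ * A + α • (Lᵀ * L))⁻¹ * Aᵀ
      = (Lᵀ * L)⁻¹ * Aᵀ * (A * (Lᵀ * L)⁻¹ * Aᵀ + α • (1 : Matrix (Fin n) (Fin n) ℝ))⁻¹ := by
  have hT : ∀ {p q : ℕ} (B : Matrix (Fin p) (Fin q) ℝ), Bᴴ = Bᵀ := fun B =>
    conjTranspose_eq_transpose_of_trivial B
  have hLL : (Lᵀ * L).PosDef := posDef_transpose_mul_self L hL
  have hΓ : ((Lᵀ * L)⁻¹).PosDef := hLL.inv
  have hAA : (Aᵀ * A).PosSemidef := by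
    rw [← hT]; exact posSemidef_conjTranspose_mul_self A
  have hM : (Aᵀ * A + α • (Lᵀ * L)).PosDef :=
    Matrix.PosDef.posSemidef_add hAA (posDef_smul' hLL hα)
  have hAGA : (A * (Lᵀ * L)⁻¹ * Aᵀ).PosSemidef := by
    rw [← hT]; exact hΓ.posSemidef.mul_mul_conjTranspose_same A
  have hN : (A * (Lᵀ * L)⁻¹ * Aᵀ + α • (1 : Matrix (Fin n) (Fin n) ℝ)).PosDef :=
    Matrix.PosDef.posSemidef_add hAGA (posDef_smul' Matrix.PosDef.one hα)
  set M := Aᵀ * A + α • (Lᵀ * L) with hMdef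
  set N := A * (Lᵀ * L)⁻¹ * Aᵀ + α • (1 : Matrix (Fin n) (Fin n) ℝ) with hNdef
  have key : Aᵀ * N = M * ((Lᵀ * L)⁻¹ * Aᵀ) := by
    have hcancel : (Lᵀ * L) * (Lᵀ * L)⁻¹ = 1 := mul_nonsing_inv _ (isUnit_iff_isUnit_det _ |>.1 hLL.isUnit)
    rw [hMdef, hNdef]
    simp only [Matrix.mul_add, Matrix.add_mul, Matrix.mul_smul, Matrix.smul_mul,
      Matrix.mul_one, ← Matrix.mul_assoc, hcancel, Matrix.one_mul]
  calc M⁻¹ * Aᵀ = M⁻¹ * (Aᵀ * N * N⁻¹) := by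
        rw [Matrix.mul_assoc Aᵀ N, mul_nonsing_inv _ (isUnit_iff_isUnit_det _ |>.1 hN.isUnit),
          Matrix.mul_one]
    _ = M⁻¹ * (M * ((Lᵀ * L)⁻¹ * Aᵀ) * N⁻¹) := by rw [key]
    _ = (Lᵀ * L)⁻¹ * Aᵀ * N⁻¹ := by
        rw [← Matrix.mul_assoc, ← Matrix.mul_assoc,
          nonsing_inv_mul _ (isUnit_iff_isUnit_det _ |>.1 hM.isUnit), Matrix.one_mul]
end

section
/- Let A, Ã_k ∈ ℝ^{n×m} with Ã_k = P̃_k A for an orthogonal projection P̃_k, and α > 0. Then ‖[(AAᵀ + αI)(Ã_k Ã_kᵀ + αI)⁻¹ − I] AAᵀ‖ ≤ 2‖A‖ (2α⁻¹‖A‖‖A − Ã_k‖ + 1) ‖A − Ã_k‖ in spectral norm. -/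
open Matrix

open scoped Matrix.Norms.L2Operator

lemma spec_eq {p q : ℕ} (A : Matrix (Fin p) (Fin q) ℝ) : specNorm A = ‖A‖ := rfl

lemma inner_symm_dot {p : ℕ} (u v : Fin p → ℝ) :
    @inner ℝ _ _ ((WithLp.equiv 2 (Fin p → ℝ)).symm u) ((WithLp.equiv 2 (Fin p → ℝ)).symm v)
      = u ⬝ᵥ v := by
  simp [PiLp.inner_apply, dotProduct, RCLike.inner_apply, mul_comm]

lemma norm_le_norm_add_of_inner_nonneg {E : Type*} [NormedAddCommGroup E]
    [InnerProductSpace ℝ E] {u w : E} (h : 0 ≤ @inner ℝ _ _ u w) : ‖u‖ ≤ ‖u + w‖ := by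
  have h2 : ‖u‖ ^ 2 ≤ ‖u + w‖ ^ 2 := by
    rw [norm_add_sq_real]; nlinarith [sq_nonneg ‖w‖]
  exact le_of_pow_le_pow_left₀ two_ne_zero (norm_nonneg _) h2

lemma matNorm_le {p q : ℕ} (B : Matrix (Fin p) (Fin q) ℝ) {c : ℝ} (hc : 0 ≤ c)
    (h : ∀ x : Fin q → ℝ, ‖(WithLp.equiv 2 (Fin p → ℝ)).symm (B *ᵥ x)‖
      ≤ c * ‖(WithLp.equiv 2 (Fin q → ℝ)).symm x‖) : ‖B‖ ≤ c := by
  rw [Matrix.l2_opNorm_def]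
  refine ContinuousLinearMap.opNorm_le_bound _ hc fun x => ?_
  simpa [Matrix.toEuclideanLin_apply] using h ((WithLp.equiv 2 (Fin q → ℝ)) x)

lemma psd_key {p : ℕ} {M : Matrix (Fin p) (Fin p) ℝ} (hM : M.PosSemidef) {α : ℝ}
    (hα : 0 < α) (y : Fin p → ℝ) :
    ‖(WithLp.equiv 2 (Fin p → ℝ)).symm (M *ᵥ y)‖
        ≤ ‖(WithLp.equiv 2 (Fin p → ℝ)).symm (M *ᵥ y + α • y)‖ ∧
      α * ‖(WithLp.equiv 2 (Fin p → ℝ)).symm y‖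
        ≤ ‖(WithLp.equiv 2 (Fin p → ℝ)).symm (M *ᵥ y + α • y)‖ := by
  set e := (WithLp.equiv 2 (Fin p → ℝ)).symm with he
  have hsplit : e (M *ᵥ y + α • y) = e (M *ᵥ y) + e (α • y) := rfl
  have h0 : 0 ≤ y ⬝ᵥ (M *ᵥ y) := by simpa using hM.dotProduct_mulVec_nonneg y
  have hinner : 0 ≤ @inner ℝ _ _ (e (M *ᵥ y)) (e (α • y)) := by
    rw [he, inner_symm_dot, dotProduct_smul]
    have hc : (M *ᵥ y) ⬝ᵥ y = y ⬝ᵥ (M *ᵥ y) := dotProduct_comm _ _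
    simp only [smul_eq_mul, hc]
    exact mul_nonneg hα.le h0
  have hs : ‖e (α • y)‖ = α * ‖e y‖ := by
    have h1 : e (α • y) = α • e y := rfl
    rw [h1, norm_smul, Real.norm_eq_abs, abs_of_pos hα]
  refine ⟨?_, ?_⟩
  · rw [hsplit]; exact norm_le_norm_add_of_inner_nonneg hinner
  · rw [hsplit, add_comm, ← hs]
    exact norm_le_norm_add_of_inner_nonneg (by rwa [real_inner_comm] at hinner)

lemma proj_norm_le {p : ℕ} {P : Matrix (Fin p) (Fin p) ℝ} (hPsym : Pᵀ = P)
    (hPidem : P * P = P) : ‖P‖ ≤ 1 := by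
  refine matNorm_le P zero_le_one fun x => ?_
  set e := (WithLp.equiv 2 (Fin p → ℝ)).symm with he
  have key : (P *ᵥ x) ⬝ᵥ (P *ᵥ x) = (P *ᵥ x) ⬝ᵥ x := by
    conv_lhs => rw [dotProduct_mulVec]
    have h1 : (P *ᵥ x) ᵥ* P = P *ᵥ (P *ᵥ x) := by
      rw [← Matrix.mulVec_transpose, hPsym]
    rw [h1, Matrix.mulVec_mulVec, hPidem]
  have hcs : @inner ℝ _ _ (e (P *ᵥ x)) (e x) ≤ ‖e (P *ᵥ x)‖ * ‖e x‖ :=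
    real_inner_le_norm _ _
  have h2 : ‖e (P *ᵥ x)‖ ^ 2 ≤ ‖e (P *ᵥ x)‖ * ‖e x‖ := by
    have hn : ‖e (P *ᵥ x)‖ ^ 2 = @inner ℝ _ _ (e (P *ᵥ x)) (e (P *ᵥ x)) :=
      (real_inner_self_eq_norm_sq _).symm
    rw [hn, he, inner_symm_dot, key, ← inner_symm_dot, ← he]
    exact hcs
  rcases eq_or_lt_of_le (norm_nonneg (e (P *ᵥ x))) with h | h
  · rw [← h]; positivity
  · nlinarith

lemma transpose_opNorm {p q : ℕ} (B : Matrix (Fin p) (Fin q) ℝ) : ‖Bᵀ‖ = ‖B‖ := by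
  rw [← Matrix.conjTranspose_eq_transpose_of_trivial]
  exact Matrix.l2_opNorm_conjTranspose B

/-- `‖[(AAᵀ + αI)(ÃₖÃₖᵀ + αI)⁻¹ − I]AAᵀ‖ ≤ 2‖A‖(2α⁻¹‖A‖‖A − Ãₖ‖ + 1)‖A − Ãₖ‖`. -/
theorem stmt15 {n m : ℕ} (A Ak : Matrix (Fin n) (Fin m) ℝ) (P : Matrix (Fin n) (Fin n) ℝ)
    (hPsym : Pᵀ = P) (hPidem : P * P = P) (hAk : Ak = P * A) (α : ℝ) (hα : 0 < α) :
    specNorm (((A * Aᵀ + α • (1 : Matrix (Fin n) (Fin n) ℝ))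
        * (Ak * Akᵀ + α • (1 : Matrix (Fin n) (Fin n) ℝ))⁻¹ - 1) * (A * Aᵀ))
      ≤ 2 * specNorm A * (2 * α⁻¹ * specNorm A * specNorm (A - Ak) + 1)
          * specNorm (A - Ak) := by
  simp only [spec_eq]
  set M := Ak * Akᵀ with hM
  set C := M + α • (1 : Matrix (Fin n) (Fin n) ℝ) with hC
  have hMpsd : M.PosSemidef := by
    have := Matrix.posSemidef_self_mul_conjTranspose Ak
    rwa [Matrix.conjTranspose_eq_transpose_of_trivial] at this
  have hsm : (α • (1 : Matrix (Fin n) (Fin n) ℝ)).PosDef := by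
    rw [Matrix.smul_one_eq_diagonal]
    exact Matrix.posDef_diagonal_iff.mpr fun _ => hα
  have hCpd : C.PosDef := Matrix.PosDef.posSemidef_add hMpsd hsm
  have hdet : IsUnit C.det := hCpd.det_pos.ne'.isUnit
  have hCC : C * C⁻¹ = 1 := Matrix.mul_nonsing_inv _ hdet
  have hCC' : C⁻¹ * C = 1 := Matrix.nonsing_inv_mul _ hdet
  have hxy : ∀ x : Fin n → ℝ, M *ᵥ (C⁻¹ *ᵥ x) + α • (C⁻¹ *ᵥ x) = x := by
    intro x
    have h1 : C *ᵥ (C⁻¹ *ᵥ x) = x := by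
      rw [Matrix.mulVec_mulVec, hCC, Matrix.one_mulVec]
    calc M *ᵥ (C⁻¹ *ᵥ x) + α • (C⁻¹ *ᵥ x) = C *ᵥ (C⁻¹ *ᵥ x) := by
          rw [hC, Matrix.add_mulVec, Matrix.smul_mulVec, Matrix.one_mulVec]
      _ = x := h1
  have hCinvNorm : ‖C⁻¹‖ ≤ α⁻¹ := by
    refine matNorm_le _ (inv_nonneg.mpr hα.le) fun x => ?_
    have hk := (psd_key hMpsd hα (C⁻¹ *ᵥ x)).2
    rw [hxy x] at hk
    rw [← mul_le_mul_iff_right₀ hα, ← mul_assoc, mul_inv_cancel₀ hα.ne', one_mul]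
    exact hk
  have hcomm : C⁻¹ * M = M * C⁻¹ := by
    have h1 : M * C = C * M := by
      rw [hC, Matrix.mul_add, Matrix.add_mul, Matrix.mul_smul, Matrix.smul_mul,
        mul_one, one_mul]
    calc C⁻¹ * M = C⁻¹ * M * (C * C⁻¹) := by rw [hCC, mul_one]
      _ = C⁻¹ * (M * C) * C⁻¹ := by simp only [Matrix.mul_assoc]
      _ = C⁻¹ * (C * M) * C⁻¹ := by rw [h1]
      _ = (C⁻¹ * C) * (M * C⁻¹) := by simp only [Matrix.mul_assoc]
      _ = M * C⁻¹ := by rw [hCC', one_mul]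
  have hCM : ‖C⁻¹ * M‖ ≤ 1 := by
    refine matNorm_le _ zero_le_one fun x => ?_
    have h2 : (C⁻¹ * M) *ᵥ x = M *ᵥ (C⁻¹ *ᵥ x) := by
      rw [hcomm, ← Matrix.mulVec_mulVec]
    have hk := (psd_key hMpsd hα (C⁻¹ *ᵥ x)).1
    rw [hxy x] at hk
    rw [h2, one_mul]
    exact hk
  have hAkn : ‖Ak‖ ≤ ‖A‖ := by
    calc ‖Ak‖ = ‖P * A‖ := by rw [hAk]
      _ ≤ ‖P‖ * ‖A‖ := Matrix.l2_opNorm_mul P A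
      _ ≤ 1 * ‖A‖ := mul_le_mul_of_nonneg_right (proj_norm_le hPsym hPidem) (norm_nonneg A)
      _ = ‖A‖ := one_mul _
  have hdiff : ‖A * Aᵀ - M‖ ≤ 2 * ‖A‖ * ‖A - Ak‖ := by
    have hsplit : A * Aᵀ - M = A * (A - Ak)ᵀ + (A - Ak) * Akᵀ := by
      rw [hM, Matrix.transpose_sub, Matrix.mul_sub, Matrix.sub_mul]; abel
    calc ‖A * Aᵀ - M‖ = ‖A * (A - Ak)ᵀ + (A - Ak) * Akᵀ‖ := by rw [hsplit]
      _ ≤ ‖A * (A - Ak)ᵀ‖ + ‖(A - Ak) * Akᵀ‖ := norm_add_le _ _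
      _ ≤ ‖A‖ * ‖(A - Ak)ᵀ‖ + ‖A - Ak‖ * ‖Akᵀ‖ :=
          add_le_add (Matrix.l2_opNorm_mul _ _) (Matrix.l2_opNorm_mul _ _)
      _ = ‖A‖ * ‖A - Ak‖ + ‖A - Ak‖ * ‖Ak‖ := by rw [transpose_opNorm, transpose_opNorm]
      _ ≤ 2 * ‖A‖ * ‖A - Ak‖ := by nlinarith [norm_nonneg (A - Ak), norm_nonneg A]
  have hE : ‖C⁻¹ * (A * Aᵀ)‖ ≤ α⁻¹ * (2 * ‖A‖ * ‖A - Ak‖) + 1 := by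
    have hsplit : C⁻¹ * (A * Aᵀ) = C⁻¹ * (A * Aᵀ - M) + C⁻¹ * M := by noncomm_ring
    calc ‖C⁻¹ * (A * Aᵀ)‖ = ‖C⁻¹ * (A * Aᵀ - M) + C⁻¹ * M‖ := by rw [hsplit]
      _ ≤ ‖C⁻¹ * (A * Aᵀ - M)‖ + ‖C⁻¹ * M‖ := norm_add_le _ _
      _ ≤ ‖C⁻¹‖ * ‖A * Aᵀ - M‖ + ‖C⁻¹ * M‖ :=
          add_le_add_left (Matrix.l2_opNorm_mul _ _) _
      _ ≤ α⁻¹ * (2 * ‖A‖ * ‖A - Ak‖) + 1 :=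
          add_le_add (mul_le_mul hCinvNorm hdiff (norm_nonneg _) (inv_nonneg.mpr hα.le)) hCM
  have hmain : ((A * Aᵀ + α • (1 : Matrix (Fin n) (Fin n) ℝ)) * C⁻¹ - 1) * (A * Aᵀ)
      = (A * Aᵀ - M) * (C⁻¹ * (A * Aᵀ)) := by
    have h1 : (A * Aᵀ + α • (1 : Matrix (Fin n) (Fin n) ℝ)) * C⁻¹ - 1
        = (A * Aᵀ - M) * C⁻¹ := by
      have h2 : (A * Aᵀ - M) * C⁻¹
          = (A * Aᵀ + α • (1 : Matrix (Fin n) (Fin n) ℝ)) * C⁻¹ - C * C⁻¹ := by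
        rw [hC]; noncomm_ring
      rw [h2, hCC]
    rw [h1, Matrix.mul_assoc]
  rw [hmain]
  calc ‖(A * Aᵀ - M) * (C⁻¹ * (A * Aᵀ))‖
      ≤ ‖A * Aᵀ - M‖ * ‖C⁻¹ * (A * Aᵀ)‖ := Matrix.l2_opNorm_mul _ _
    _ ≤ (2 * ‖A‖ * ‖A - Ak‖) * (α⁻¹ * (2 * ‖A‖ * ‖A - Ak‖) + 1) := by
        refine mul_le_mul hdiff hE (norm_nonneg _) ?_
        positivity
    _ = 2 * ‖A‖ * (2 * α⁻¹ * ‖A‖ * ‖A - Ak‖ + 1) * ‖A - Ak‖ := by ring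
end
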